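/- Fix an integer q ≥ 2 and let (x_1, x_2, x_3) ∼ D_NBTW. Then the three coordinates are pairwise independent and each is uniformly distributed on [q], and E[NBTW(x_1, x_2, x_3)] ≥ 1 − 3/q, where NBTW is evaluated via its extension to ℤ^3. -/

import Mathlib

open Classical Finset

noncomputable section
namespace OCSPPaper

/-- A permutation `σ` is compatible with the tuple `a` if `σ i < σ j` whenever `a i < a j`. -/
def compatiblePerm {m : ℕ} (a : Fin m → ℤ) (σ : Equiv.Perm (Fin m)) : Prop :=
  ∀ i j : Fin m, a i < a j → σ i < σ j

/-- The extension of an ordering predicate `P ⊆ S_m` to arbitrary integer tuples: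
the fraction of compatible permutations that belong to `P`. -/
noncomputable def extPred {m : ℕ} (P : Finset (Equiv.Perm (Fin m))) (a : Fin m → ℤ) : ℝ :=
  ((Finset.univ.filter fun σ => compatiblePerm a σ ∧ σ ∈ P).card : ℝ) /
    ((Finset.univ.filter fun σ => compatiblePerm a σ).card : ℝ)

/-- The non-betweenness predicate `NBTW ⊆ S_3`: the third element does not lie strictly
between the first two. -/
def nbtwPerm3 : Finset (Equiv.Perm (Fin 3)) :=
  Finset.univ.filter fun σ => σ 2 ≠ 1

/-- Density of the distribution `D_NBTW` on `ℤ³`: `x₁, x₂` independent uniform on `[q]` and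
`x₃ = x₁ + x₂ mod q`. -/
noncomputable def dNBTW (q : ℕ) : ℤ × ℤ × ℤ → ℝ := fun p =>
  if 0 ≤ p.1 ∧ p.1 < (q : ℤ) ∧ 0 ≤ p.2.1 ∧ p.2.1 < (q : ℤ) ∧
      p.2.2 = (p.1 + p.2.1) % (q : ℤ)
  then 1 / ((q : ℝ) * q) else 0

/-- Marginal of the first coordinate of `D_NBTW`. -/
noncomputable def dNBTWm1 (q : ℕ) (a : ℤ) : ℝ :=
  ∑ᶠ p : ℤ × ℤ × ℤ, if p.1 = a then dNBTW q p else 0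

/-- Marginal of the second coordinate of `D_NBTW`. -/
noncomputable def dNBTWm2 (q : ℕ) (a : ℤ) : ℝ :=
  ∑ᶠ p : ℤ × ℤ × ℤ, if p.2.1 = a then dNBTW q p else 0

/-- Marginal of the third coordinate of `D_NBTW`. -/
noncomputable def dNBTWm3 (q : ℕ) (a : ℤ) : ℝ :=
  ∑ᶠ p : ℤ × ℤ × ℤ, if p.2.2 = a then dNBTW q p else 0

/-! ### Auxiliary lemmas -/

lemma compat_nonempty {m : ℕ} (a : Fin m → ℤ) :
    (Finset.univ.filter fun σ => compatiblePerm a σ).Nonempty := by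
  refine ⟨(Tuple.sort a)⁻¹, ?_⟩
  simp only [mem_filter, mem_univ, true_and]
  intro i j hij
  by_contra h
  push_neg at h
  have h2 := Tuple.monotone_sort a h
  simp only [Function.comp_apply, Equiv.Perm.inv_def, Equiv.apply_symm_apply] at h2
  omega

lemma extPred_nonneg {m : ℕ} (P : Finset (Equiv.Perm (Fin m))) (a : Fin m → ℤ) :
    0 ≤ extPred P a := by
  unfold extPred
  positivity

lemma extPred_eq_one (a : Fin 3 → ℤ)
    (h : (a 0 < a 2 ∧ a 1 < a 2) ∨ (a 2 < a 0 ∧ a 2 < a 1)) :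
    extPred nbtwPerm3 a = 1 := by
  have hmem : ∀ σ : Equiv.Perm (Fin 3), compatiblePerm a σ → σ 2 ≠ 1 := by
    intro σ hσ
    have hne : σ 0 ≠ σ 1 := fun he => by
      have := σ.injective he; simp [Fin.ext_iff] at this
    have hv0 : (σ 0).val < 3 := (σ 0).isLt
    have hv1 : (σ 1).val < 3 := (σ 1).isLt
    have hv2 : (σ 2).val < 3 := (σ 2).isLt
    rw [Fin.ne_iff_vne] at hne ⊢
    rcases h with ⟨h0, h1⟩ | ⟨h0, h1⟩
    · have e0 := hσ 0 2 h0
      have e1 := hσ 1 2 h1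
      rw [Fin.lt_def] at e0 e1
      omega
    · have e0 := hσ 2 0 h0
      have e1 := hσ 2 1 h1
      rw [Fin.lt_def] at e0 e1
      omega
  have hfilter : (Finset.univ.filter fun σ => compatiblePerm a σ ∧ σ ∈ nbtwPerm3) =
      Finset.univ.filter fun σ => compatiblePerm a σ := by
    ext σ
    simp only [mem_filter, mem_univ, true_and, nbtwPerm3]
    exact ⟨fun hh => hh.1, fun hh => ⟨hh, hmem σ hh⟩⟩
  have hne := compat_nonempty a
  rw [extPred, hfilter]
  have hcard : ((Finset.univ.filter fun σ => compatiblePerm a σ).card : ℝ) ≠ 0 := by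
    have := Finset.card_pos.mpr hne
    positivity
  exact div_self hcard

lemma finsum_dNBTW (q : ℕ) (g : ℤ × ℤ × ℤ → ℝ)
    (hg : ∀ p, g p ≠ 0 → dNBTW q p ≠ 0) :
    ∑ᶠ p : ℤ × ℤ × ℤ, g p =
      ∑ x ∈ Finset.Ico (0:ℤ) q, ∑ y ∈ Finset.Ico (0:ℤ) q, g (x, y, (x + y) % q) := by
  classical
  set e : ℤ × ℤ → ℤ × ℤ × ℤ := fun p => (p.1, p.2, (p.1 + p.2) % q) with he
  have hinj : Set.InjOn e ((Finset.Ico (0:ℤ) q ×ˢ Finset.Ico (0:ℤ) q) : Finset (ℤ × ℤ)) := by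
    intro p _ p' _ hpp
    have h1 : (e p).1 = (e p').1 := congrArg Prod.fst hpp
    have h2 : (e p).2.1 = (e p').2.1 := congrArg (fun z => z.2.1) hpp
    simp only [he] at h1 h2
    exact Prod.ext h1 h2
  have hsupp : Function.support g ⊆
      ((Finset.Ico (0:ℤ) q ×ˢ Finset.Ico (0:ℤ) q).image e : Finset (ℤ × ℤ × ℤ)) := by
    intro p hp
    have hd := hg p hp
    simp only [dNBTW, ne_eq, ite_eq_right_iff, not_forall] at hd
    obtain ⟨⟨h1, h2, h3, h4, h5⟩, -⟩ := hd
    simp only [Finset.coe_image, Set.mem_image, Finset.mem_coe, Finset.mem_product,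
      Finset.mem_Ico]
    exact ⟨(p.1, p.2.1), ⟨⟨h1, h2⟩, ⟨h3, h4⟩⟩, by simp [he, ← h5]⟩
  rw [finsum_eq_sum_of_support_subset g hsupp,
    Finset.sum_image (fun p hp p' hp' => hinj (by exact_mod_cast hp) (by exact_mod_cast hp')),
    Finset.sum_product]

lemma dNBTW_val (q : ℕ) (x y : ℤ) (hx : x ∈ Finset.Ico (0:ℤ) q)
    (hy : y ∈ Finset.Ico (0:ℤ) q) :
    dNBTW q (x, y, (x + y) % q) = 1 / ((q : ℝ) * q) := by
  simp only [Finset.mem_Ico] at hx hy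
  simp [dNBTW, hx.1, hx.2, hy.1, hy.2]

lemma key_emod (Q : ℤ) (u v : ℤ) : (u % Q - v) % Q = (u - v) % Q := by
  rw [Int.sub_emod, Int.emod_emod_of_dvd _ dvd_rfl, ← Int.sub_emod]

/-- Inner sum for the third marginal. -/
lemma inner_sum_emod (q : ℕ) (hq : 0 < q) (t b : ℤ) (c : ℝ) :
    (∑ y ∈ Finset.Ico (0:ℤ) q, if (t + y) % (q:ℤ) = b then c else 0)
      = if 0 ≤ b ∧ b < (q:ℤ) then c else 0 := by
  have hQ : (0:ℤ) < q := by exact_mod_cast hq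
  by_cases hb : 0 ≤ b ∧ b < (q:ℤ)
  · rw [if_pos hb]
    have hmem : (b - t) % (q:ℤ) ∈ Finset.Ico (0:ℤ) q := by
      simp only [Finset.mem_Ico]
      exact ⟨Int.emod_nonneg _ (ne_of_gt hQ), Int.emod_lt_of_pos _ hQ⟩
    rw [Finset.sum_eq_single_of_mem ((b - t) % (q:ℤ)) hmem]
    · rw [if_pos]
      have : (t + (b - t) % (q:ℤ)) % (q:ℤ) = (t + (b - t)) % (q:ℤ) := by
        rw [Int.add_emod, Int.emod_emod_of_dvd _ dvd_rfl, ← Int.add_emod]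
      rw [this]
      have h2 : t + (b - t) = b := by ring
      rw [h2, Int.emod_eq_of_lt hb.1 hb.2]
    · intro y hy hyne
      rw [if_neg]
      intro hcon
      apply hyne
      have : (b - t) % (q:ℤ) = y := by
        rw [← hcon, key_emod]
        have h3 : t + y - t = y := by ring
        rw [h3]
        simp only [Finset.mem_Ico] at hy
        exact Int.emod_eq_of_lt hy.1 hy.2
      exact this.symm
  · rw [if_neg hb]
    apply Finset.sum_eq_zero
    intro y _
    rw [if_neg]
    intro hcon
    apply hb
    rw [← hcon]
    exact ⟨Int.emod_nonneg _ (ne_of_gt hQ), Int.emod_lt_of_pos _ hQ⟩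

lemma card_Ico_q (q : ℕ) : (Finset.Ico (0:ℤ) q).card = q := by
  rw [Int.card_Ico]
  simp

/-- The third marginal inner double sum. -/
lemma m3_eval (q : ℕ) (hq : 0 < q) (a : ℤ) :
    dNBTWm3 q a = if 0 ≤ a ∧ a < (q:ℤ) then 1 / (q:ℝ) else 0 := by
  have hq0 : (q:ℝ) ≠ 0 := by positivity
  rw [dNBTWm3, finsum_dNBTW q _ (by
    intro p hp hd
    apply hp
    simp only [hd, ite_self])]
  have hstep : ∀ x ∈ Finset.Ico (0:ℤ) q,
      (∑ y ∈ Finset.Ico (0:ℤ) q,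
        if (x, y, (x + y) % (q:ℤ)).2.2 = a then dNBTW q (x, y, (x + y) % (q:ℤ)) else 0)
      = if 0 ≤ a ∧ a < (q:ℤ) then 1 / ((q:ℝ) * q) else 0 := by
    intro x hx
    rw [← inner_sum_emod q hq x a (1 / ((q:ℝ) * q))]
    apply Finset.sum_congr rfl
    intro y hy
    rw [dNBTW_val q x y hx hy]
  rw [Finset.sum_congr rfl hstep, Finset.sum_const, card_Ico_q, nsmul_eq_mul]
  by_cases ha : 0 ≤ a ∧ a < (q:ℤ)
  · rw [if_pos ha, if_pos ha]
    field_simp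
  · rw [if_neg ha, if_neg ha, mul_zero]

lemma m1_eval (q : ℕ) (hq : 0 < q) (a : ℤ) :
    dNBTWm1 q a = if 0 ≤ a ∧ a < (q:ℤ) then 1 / (q:ℝ) else 0 := by
  have hq0 : (q:ℝ) ≠ 0 := by positivity
  rw [dNBTWm1, finsum_dNBTW q _ (by
    intro p hp hd
    apply hp
    simp only [hd, ite_self])]
  have hstep : ∀ x ∈ Finset.Ico (0:ℤ) q,
      (∑ y ∈ Finset.Ico (0:ℤ) q,
        if (x, y, (x + y) % (q:ℤ)).1 = a then dNBTW q (x, y, (x + y) % (q:ℤ)) else 0)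
      = if x = a then 1 / (q:ℝ) else 0 := by
    intro x hx
    have : ∀ y ∈ Finset.Ico (0:ℤ) q,
        (if (x, y, (x + y) % (q:ℤ)).1 = a then dNBTW q (x, y, (x + y) % (q:ℤ)) else 0)
        = if x = a then 1 / ((q:ℝ) * q) else 0 := by
      intro y hy
      by_cases hxa : x = a
      · rw [if_pos hxa, if_pos hxa, dNBTW_val q x y hx hy]
      · rw [if_neg hxa, if_neg hxa]
    rw [Finset.sum_congr rfl this, Finset.sum_const, card_Ico_q, nsmul_eq_mul]
    by_cases hxa : x = a
    · rw [if_pos hxa, if_pos hxa]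
      field_simp
    · rw [if_neg hxa, if_neg hxa, mul_zero]
  rw [Finset.sum_congr rfl hstep, Finset.sum_ite_eq' (Finset.Ico (0:ℤ) q) a]
  simp [Finset.mem_Ico]

lemma m2_eval (q : ℕ) (hq : 0 < q) (a : ℤ) :
    dNBTWm2 q a = if 0 ≤ a ∧ a < (q:ℤ) then 1 / (q:ℝ) else 0 := by
  have hq0 : (q:ℝ) ≠ 0 := by positivity
  rw [dNBTWm2, finsum_dNBTW q _ (by
    intro p hp hd
    apply hp
    simp only [hd, ite_self])]
  have hstep : ∀ x ∈ Finset.Ico (0:ℤ) q,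
      (∑ y ∈ Finset.Ico (0:ℤ) q,
        if (x, y, (x + y) % (q:ℤ)).2.1 = a then dNBTW q (x, y, (x + y) % (q:ℤ)) else 0)
      = if 0 ≤ a ∧ a < (q:ℤ) then 1 / ((q:ℝ) * q) else 0 := by
    intro x hx
    have : ∀ y ∈ Finset.Ico (0:ℤ) q,
        (if (x, y, (x + y) % (q:ℤ)).2.1 = a then dNBTW q (x, y, (x + y) % (q:ℤ)) else 0)
        = if y = a then 1 / ((q:ℝ) * q) else 0 := by
      intro y hy
      by_cases hya : y = a
      · rw [if_pos hya, if_pos hya, dNBTW_val q x y hx hy]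
      · rw [if_neg hya, if_neg hya]
    rw [Finset.sum_congr rfl this, Finset.sum_ite_eq' (Finset.Ico (0:ℤ) q) a]
    simp [Finset.mem_Ico]
  rw [Finset.sum_congr rfl hstep, Finset.sum_const, card_Ico_q, nsmul_eq_mul]
  by_cases ha : 0 ≤ a ∧ a < (q:ℤ)
  · rw [if_pos ha, if_pos ha]
    field_simp
  · rw [if_neg ha, if_neg ha, mul_zero]


lemma joint12 (q : ℕ) (hq : 0 < q) (a b : ℤ) :
    (∑ᶠ p : ℤ × ℤ × ℤ, if p.1 = a ∧ p.2.1 = b then dNBTW q p else 0)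
      = dNBTWm1 q a * dNBTWm2 q b := by
  have hq0 : (q:ℝ) ≠ 0 := by positivity
  rw [finsum_dNBTW q _ (by intro p hp hd; apply hp; simp only [hd, ite_self]),
    m1_eval q hq a, m2_eval q hq b]
  have hstep : ∀ x ∈ Finset.Ico (0:ℤ) q,
      (∑ y ∈ Finset.Ico (0:ℤ) q,
        if (x, y, (x + y) % (q:ℤ)).1 = a ∧ (x, y, (x + y) % (q:ℤ)).2.1 = b
        then dNBTW q (x, y, (x + y) % (q:ℤ)) else 0)
      = if x = a then (if 0 ≤ b ∧ b < (q:ℤ) then 1 / ((q:ℝ) * q) else 0) else 0 := by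
    intro x hx
    have h1 : ∀ y ∈ Finset.Ico (0:ℤ) q,
        (if (x, y, (x + y) % (q:ℤ)).1 = a ∧ (x, y, (x + y) % (q:ℤ)).2.1 = b
          then dNBTW q (x, y, (x + y) % (q:ℤ)) else 0)
        = if x = a then (if y = b then 1 / ((q:ℝ) * q) else 0) else 0 := by
      intro y hy
      rw [dNBTW_val q x y hx hy]
      by_cases hxa : x = a <;> by_cases hyb : y = b <;> simp [hxa, hyb]
    rw [Finset.sum_congr rfl h1]
    by_cases hxa : x = a
    · simp only [if_pos hxa]
      rw [Finset.sum_ite_eq' (Finset.Ico (0:ℤ) q) b]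
      simp [Finset.mem_Ico]
    · simp [hxa]
  rw [Finset.sum_congr rfl hstep, Finset.sum_ite_eq' (Finset.Ico (0:ℤ) q) a]
  simp only [Finset.mem_Ico]
  by_cases ha : 0 ≤ a ∧ a < (q:ℤ) <;> by_cases hb : 0 ≤ b ∧ b < (q:ℤ) <;>
    simp [ha, hb] <;> field_simp

lemma joint13 (q : ℕ) (hq : 0 < q) (a b : ℤ) :
    (∑ᶠ p : ℤ × ℤ × ℤ, if p.1 = a ∧ p.2.2 = b then dNBTW q p else 0)
      = dNBTWm1 q a * dNBTWm3 q b := by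
  have hq0 : (q:ℝ) ≠ 0 := by positivity
  rw [finsum_dNBTW q _ (by intro p hp hd; apply hp; simp only [hd, ite_self]),
    m1_eval q hq a, m3_eval q hq b]
  have hstep : ∀ x ∈ Finset.Ico (0:ℤ) q,
      (∑ y ∈ Finset.Ico (0:ℤ) q,
        if (x, y, (x + y) % (q:ℤ)).1 = a ∧ (x, y, (x + y) % (q:ℤ)).2.2 = b
        then dNBTW q (x, y, (x + y) % (q:ℤ)) else 0)
      = if x = a then (if 0 ≤ b ∧ b < (q:ℤ) then 1 / ((q:ℝ) * q) else 0) else 0 := by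
    intro x hx
    have h1 : ∀ y ∈ Finset.Ico (0:ℤ) q,
        (if (x, y, (x + y) % (q:ℤ)).1 = a ∧ (x, y, (x + y) % (q:ℤ)).2.2 = b
          then dNBTW q (x, y, (x + y) % (q:ℤ)) else 0)
        = if x = a then (if (x + y) % (q:ℤ) = b then 1 / ((q:ℝ) * q) else 0) else 0 := by
      intro y hy
      rw [dNBTW_val q x y hx hy]
      by_cases hxa : x = a <;> by_cases hyb : (x + y) % (q:ℤ) = b <;> simp [hxa, hyb]
    rw [Finset.sum_congr rfl h1]
    by_cases hxa : x = a
    · simp only [if_pos hxa]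
      exact inner_sum_emod q hq x b _
    · simp [hxa]
  rw [Finset.sum_congr rfl hstep, Finset.sum_ite_eq' (Finset.Ico (0:ℤ) q) a]
  simp only [Finset.mem_Ico]
  by_cases ha : 0 ≤ a ∧ a < (q:ℤ) <;> by_cases hb : 0 ≤ b ∧ b < (q:ℤ) <;>
    simp [ha, hb] <;> field_simp

lemma joint23 (q : ℕ) (hq : 0 < q) (a b : ℤ) :
    (∑ᶠ p : ℤ × ℤ × ℤ, if p.2.1 = a ∧ p.2.2 = b then dNBTW q p else 0)
      = dNBTWm2 q a * dNBTWm3 q b := by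
  have hq0 : (q:ℝ) ≠ 0 := by positivity
  rw [finsum_dNBTW q _ (by intro p hp hd; apply hp; simp only [hd, ite_self]),
    m2_eval q hq a, m3_eval q hq b]
  have hstep : ∀ x ∈ Finset.Ico (0:ℤ) q,
      (∑ y ∈ Finset.Ico (0:ℤ) q,
        if (x, y, (x + y) % (q:ℤ)).2.1 = a ∧ (x, y, (x + y) % (q:ℤ)).2.2 = b
        then dNBTW q (x, y, (x + y) % (q:ℤ)) else 0)
      = if 0 ≤ a ∧ a < (q:ℤ) then (if (x + a) % (q:ℤ) = b then 1 / ((q:ℝ) * q) else 0)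
        else 0 := by
    intro x hx
    have h1 : ∀ y ∈ Finset.Ico (0:ℤ) q,
        (if (x, y, (x + y) % (q:ℤ)).2.1 = a ∧ (x, y, (x + y) % (q:ℤ)).2.2 = b
          then dNBTW q (x, y, (x + y) % (q:ℤ)) else 0)
        = if y = a then (if (x + y) % (q:ℤ) = b then 1 / ((q:ℝ) * q) else 0) else 0 := by
      intro y hy
      rw [dNBTW_val q x y hx hy]
      by_cases hya : y = a <;> by_cases hyb : (x + y) % (q:ℤ) = b <;> simp [hya, hyb]
    rw [Finset.sum_congr rfl h1]
    have := Finset.sum_ite_eq' (Finset.Ico (0:ℤ) q) a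
      (fun y => if (x + y) % (q:ℤ) = b then 1 / ((q:ℝ) * q) else 0)
    rw [this]
    simp [Finset.mem_Ico]
  rw [Finset.sum_congr rfl hstep]
  by_cases ha : 0 ≤ a ∧ a < (q:ℤ)
  · simp only [if_pos ha]
    have h2 : ∀ x ∈ Finset.Ico (0:ℤ) q,
        (if (x + a) % (q:ℤ) = b then 1 / ((q:ℝ) * q) else 0)
        = if (a + x) % (q:ℤ) = b then 1 / ((q:ℝ) * q) else 0 := by
      intro x _
      rw [add_comm]
    rw [Finset.sum_congr rfl h2, inner_sum_emod q hq a b _]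
    by_cases hb : 0 ≤ b ∧ b < (q:ℤ) <;> simp [ha, hb] <;> field_simp
  · simp [ha]

lemma emod_high (Q x y : ℤ) (hQ : 0 < Q) (hx : Q ≤ x + y) (hy : x + y < 2 * Q) :
    (x + y) % Q = x + y - Q := by
  have h : (x + y) % Q = (x + y - Q + Q * 1) % Q := by ring_nf
  rw [h, Int.add_mul_emod_self_left]
  exact Int.emod_eq_of_lt (by omega) (by omega)

lemma expect_bound (q : ℕ) (hq : 2 ≤ q) :
    (∑ᶠ p : ℤ × ℤ × ℤ, dNBTW q p * extPred nbtwPerm3 ![p.1, p.2.1, p.2.2])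
      ≥ 1 - 3 / (q : ℝ) := by
  have hq0 : (0:ℤ) < q := by exact_mod_cast Nat.lt_of_lt_of_le Nat.zero_lt_two hq
  have hqR : (0:ℝ) < q := by exact_mod_cast Nat.lt_of_lt_of_le Nat.zero_lt_two hq
  have hqne : (q:ℝ) ≠ 0 := ne_of_gt hqR
  set c : ℝ := 1 / ((q:ℝ) * q) with hc
  have hc0 : (0:ℝ) ≤ c := by positivity
  rw [finsum_dNBTW q _ (by intro p hp hd; apply hp; rw [hd, zero_mul])]
  set B := Finset.Ico (0:ℤ) q with hB
  set F : ℤ → ℤ → ℝ := fun x y =>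
    c - (if x = 0 then c else 0) - (if y = 0 then c else 0) - (if x = y then c else 0)
    with hF
  have hpt : ∀ x ∈ B, ∀ y ∈ B,
      F x y ≤ dNBTW q (x, y, (x + y) % (q:ℤ)) *
        extPred nbtwPerm3 ![(x, y, (x + y) % (q:ℤ)).1, (x, y, (x + y) % (q:ℤ)).2.1,
          (x, y, (x + y) % (q:ℤ)).2.2] := by
    intro x hx y hy
    rw [dNBTW_val q x y hx hy]
    have hE0 : 0 ≤ extPred nbtwPerm3 ![x, y, (x + y) % (q:ℤ)] := extPred_nonneg _ _
    simp only [Finset.mem_Ico, hB] at hx hy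
    by_cases hbad : x = 0 ∨ y = 0 ∨ x = y
    · have hFle : F x y ≤ 0 := by
        simp only [hF]
        split_ifs with h1 h2 h3 <;> first
          | linarith
          | (exfalso; tauto)
      calc F x y ≤ 0 := hFle
        _ ≤ _ := by positivity
    · push_neg at hbad
      obtain ⟨hx0, hy0, hxy⟩ := hbad
      have hE1 : extPred nbtwPerm3 ![x, y, (x + y) % (q:ℤ)] = 1 := by
        apply extPred_eq_one
        have ha0 : (![x, y, (x + y) % (q:ℤ)]) 0 = x := rfl
        have ha1 : (![x, y, (x + y) % (q:ℤ)]) 1 = y := rfl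
        have ha2 : (![x, y, (x + y) % (q:ℤ)]) 2 = (x + y) % (q:ℤ) := rfl
        rw [ha0, ha1, ha2]
        by_cases hsum : x + y < (q:ℤ)
        · left
          rw [Int.emod_eq_of_lt (by omega) hsum]
          omega
        · right
          rw [emod_high (q:ℤ) x y hq0 (by omega) (by omega)]
          omega
      rw [hE1, mul_one]
      simp only [hF, if_neg hx0, if_neg hy0, if_neg hxy]
      simp [hc]
  have hstep1 : ∑ x ∈ B, ∑ y ∈ B, F x y ≤
      ∑ x ∈ B, ∑ y ∈ B, dNBTW q (x, y, (x + y) % (q:ℤ)) *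
        extPred nbtwPerm3 ![(x, y, (x + y) % (q:ℤ)).1, (x, y, (x + y) % (q:ℤ)).2.1,
          (x, y, (x + y) % (q:ℤ)).2.2] := by
    apply Finset.sum_le_sum
    intro x hx
    exact Finset.sum_le_sum (hpt x hx)
  have hcard : (B.card : ℝ) = q := by rw [hB, card_Ico_q]
  have hzero_mem : (0:ℤ) ∈ B := by rw [hB, Finset.mem_Ico]; omega
  have hinner : ∀ x ∈ B, ∑ y ∈ B, F x y
      = (q:ℝ) * c - (q:ℝ) * (if x = 0 then c else 0) - c - c := by
    intro x hx
    simp only [hF]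
    rw [Finset.sum_sub_distrib, Finset.sum_sub_distrib, Finset.sum_sub_distrib,
      Finset.sum_const, Finset.sum_const, nsmul_eq_mul, nsmul_eq_mul,
      Finset.sum_ite_eq' B (0:ℤ) (fun _ => c), Finset.sum_ite_eq B x (fun _ => c),
      if_pos hzero_mem, if_pos hx, hcard]
  rw [Finset.sum_congr rfl hinner] at hstep1
  have houter : ∑ x ∈ B, ((q:ℝ) * c - (q:ℝ) * (if x = 0 then c else 0) - c - c)
      = (q:ℝ) * ((q:ℝ) * c) - (q:ℝ) * c - (q:ℝ) * c - (q:ℝ) * c := by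
    have h2 : ∑ x ∈ B, ((q:ℝ) * if x = 0 then c else 0) = (q:ℝ) * c := by
      rw [← Finset.mul_sum, Finset.sum_ite_eq' B (0:ℤ) (fun _ => c), if_pos hzero_mem]
    rw [Finset.sum_sub_distrib, Finset.sum_sub_distrib, Finset.sum_sub_distrib, h2,
      Finset.sum_const, Finset.sum_const, nsmul_eq_mul, nsmul_eq_mul, hcard]
  rw [houter] at hstep1
  have hval : (q:ℝ) * ((q:ℝ) * c) - (q:ℝ) * c - (q:ℝ) * c - (q:ℝ) * c
      = 1 - 3 / (q:ℝ) := by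
    rw [hc]
    field_simp
    ring
  rw [hval] at hstep1
  exact hstep1

/-- properties of the base distribution `D_NBTW`.
The three coordinates are uniform on `[q]` and pairwise independent, and
`E[NBTW(x₁, x₂, x₃)] ≥ 1 - 3/q`. -/
theorem dNBTW_properties (q : ℕ) (hq : 2 ≤ q) :
    (∀ a : ℤ, dNBTWm1 q a = if 0 ≤ a ∧ a < (q : ℤ) then 1 / (q : ℝ) else 0) ∧
    (∀ a : ℤ, dNBTWm2 q a = if 0 ≤ a ∧ a < (q : ℤ) then 1 / (q : ℝ) else 0) ∧
    (∀ a : ℤ, dNBTWm3 q a = if 0 ≤ a ∧ a < (q : ℤ) then 1 / (q : ℝ) else 0) ∧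
    (∀ a b : ℤ, (∑ᶠ p : ℤ × ℤ × ℤ, if p.1 = a ∧ p.2.1 = b then dNBTW q p else 0)
        = dNBTWm1 q a * dNBTWm2 q b) ∧
    (∀ a b : ℤ, (∑ᶠ p : ℤ × ℤ × ℤ, if p.1 = a ∧ p.2.2 = b then dNBTW q p else 0)
        = dNBTWm1 q a * dNBTWm3 q b) ∧
    (∀ a b : ℤ, (∑ᶠ p : ℤ × ℤ × ℤ, if p.2.1 = a ∧ p.2.2 = b then dNBTW q p else 0)
        = dNBTWm2 q a * dNBTWm3 q b) ∧
    (∑ᶠ p : ℤ × ℤ × ℤ, dNBTW q p * extPred nbtwPerm3 ![p.1, p.2.1, p.2.2])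
      ≥ 1 - 3 / (q : ℝ) := by

  have hq0 : 0 < q := by omega
  exact ⟨m1_eval q hq0, m2_eval q hq0, m3_eval q hq0, joint12 q hq0, joint13 q hq0,
    joint23 q hq0, expect_bound q hq⟩

end OCSPPaper
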